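/- Let X ~ N(0, P) and Z ~ N(0, σ_Z²) be independent real Gaussian random variables, and set U = X + tS with S ~ N(0, σ_S²) independent of (X,Z), and Y = X + Z + S. With the choice t = P/(P + σ_Z²), the random variable U − tY = X − t(X+Z) is statistically independent of the pair (X+Z, S), and consequently I(U;Y) − I(U;S) = (1/2)log₂(1 + P/σ_Z²). -/

import Mathlib

open MeasureTheory ProbabilityTheory

/-- Differential entropy (base 2) of a random variable with values in `E`,
computed from its pdf with respect to `μ`. -/
noncomputable def dEnt {Ω E : Type*} [MeasureSpace Ω] [MeasurableSpace E]
    (μ : Measure E) (U : Ω → E) : ℝ :=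
  -∫ x, (pdf U volume μ x).toReal * Real.logb 2 (pdf U volume μ x).toReal ∂μ

/-- Differential mutual information `I(U;Y)` of real random variables. -/
noncomputable def dMI {Ω : Type*} [MeasureSpace Ω] (U Y : Ω → ℝ) : ℝ :=
  dEnt (volume : Measure ℝ) U + dEnt (volume : Measure ℝ) Y
    - dEnt (volume : Measure (ℝ × ℝ)) (fun ω => (U ω, Y ω))

open Real Set
open scoped ENNReal NNReal

noncomputable def Hent (v : ℝ≥0) : ℝ :=
  Real.logb 2 (2 * Real.pi * v) / 2 + 1 / (2 * Real.log 2)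

/-- second moment of centered gaussian kernel -/
lemma integral_sq_exp {b : ℝ} (hb : 0 < b) :
    ∫ x : ℝ, x ^ 2 * Real.exp (-b * x ^ 2) = Real.sqrt (Real.pi / b) / (2 * b) := by
  have hint_sq : Integrable (fun x : ℝ => x ^ 2 * Real.exp (-b * x ^ 2)) := by
    have h := integrable_rpow_mul_exp_neg_mul_sq hb (by norm_num : (-1 : ℝ) < 2)
    have : (fun x : ℝ => x ^ (2 : ℝ) * Real.exp (-b * x ^ 2))
        = fun x : ℝ => x ^ 2 * Real.exp (-b * x ^ 2) := by
      funext x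
      rw [show (2:ℝ) = ((2:ℕ):ℝ) by norm_num, Real.rpow_natCast]
    rwa [this] at h
  have hderiv : ∀ x : ℝ, HasDerivAt (fun x : ℝ => x * Real.exp (-b * x ^ 2))
      (Real.exp (-b * x ^ 2) - 2 * b * (x ^ 2 * Real.exp (-b * x ^ 2))) x := by
    intro x
    have h1 : HasDerivAt (fun x : ℝ => x) 1 x := hasDerivAt_id x
    have h2 : HasDerivAt (fun x : ℝ => Real.exp (-b * x ^ 2))
        (Real.exp (-b * x ^ 2) * (-b * (2 * x ^ 1))) x :=
      (((hasDerivAt_pow 2 x).const_mul (-b)).exp)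
    have : HasDerivAt (fun x : ℝ => x * Real.exp (-b * x ^ 2))
        (1 * Real.exp (-b * x ^ 2) + x * (Real.exp (-b * x ^ 2) * (-b * (2 * x ^ 1)))) x :=
      h1.fun_mul h2
    convert this using 1
    ring
  have hzero := integral_eq_zero_of_hasDerivAt_of_integrable hderiv
    ((integrable_exp_neg_mul_sq hb).sub (hint_sq.const_mul (2 * b)))
    (integrable_mul_exp_neg_mul_sq hb)
  rw [integral_sub (integrable_exp_neg_mul_sq hb) (hint_sq.const_mul (2 * b)),
    MeasureTheory.integral_const_mul, integral_gaussian, sub_eq_zero] at hzero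
  field_simp at hzero ⊢
  linarith

section GaussFacts
variable {v : ℝ≥0}

lemma two_pi_v_pos (hv : v ≠ 0) : 0 < 2 * Real.pi * v := by
  have : (0:ℝ) < v := by exact_mod_cast pos_iff_ne_zero.mpr hv
  positivity

lemma gaussianPDFReal_zero_mean (v : ℝ≥0) (x : ℝ) :
    gaussianPDFReal 0 v x = (Real.sqrt (2 * Real.pi * v))⁻¹ * Real.exp (-(1/(2*(v:ℝ))) * x ^ 2) := by
  rw [gaussianPDFReal]
  ring_nf

lemma integrable_sq_gaussianPDFReal (v : ℝ≥0) :
    Integrable (fun x : ℝ => x ^ 2 * gaussianPDFReal 0 v x) := by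
  by_cases hv : v = 0
  · simp [hv, gaussianPDFReal_zero_var]
  have hvpos : (0:ℝ) < v := by exact_mod_cast pos_iff_ne_zero.mpr hv
  have hb : (0:ℝ) < 1/(2*(v:ℝ)) := by positivity
  have h := integrable_rpow_mul_exp_neg_mul_sq hb (by norm_num : (-1 : ℝ) < 2)
  have h2 : Integrable (fun x : ℝ => x ^ 2 * Real.exp (-(1/(2*(v:ℝ))) * x ^ 2)) := by
    have : (fun x : ℝ => x ^ (2 : ℝ) * Real.exp (-(1/(2*(v:ℝ))) * x ^ 2))
        = fun x : ℝ => x ^ 2 * Real.exp (-(1/(2*(v:ℝ))) * x ^ 2) := by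
      funext x
      rw [show (2:ℝ) = ((2:ℕ):ℝ) by norm_num, Real.rpow_natCast]
    rwa [this] at h
  have := h2.const_mul (Real.sqrt (2 * Real.pi * v))⁻¹
  apply this.congr
  · filter_upwards with x
    rw [gaussianPDFReal_zero_mean]
    ring

lemma integral_sq_gaussianPDFReal (hv : v ≠ 0) :
    ∫ x : ℝ, x ^ 2 * gaussianPDFReal 0 v x = v := by
  have hvpos : (0:ℝ) < v := by exact_mod_cast pos_iff_ne_zero.mpr hv
  have hb : (0:ℝ) < 1/(2*(v:ℝ)) := by positivity
  have key := integral_sq_exp hb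
  have : ∫ x : ℝ, x ^ 2 * gaussianPDFReal 0 v x
      = (Real.sqrt (2 * Real.pi * v))⁻¹ * ∫ x : ℝ, x ^ 2 * Real.exp (-(1/(2*(v:ℝ))) * x ^ 2) := by
    rw [← MeasureTheory.integral_const_mul]
    congr 1
    funext x
    rw [gaussianPDFReal_zero_mean]
    ring
  rw [this, key]
  have h1 : Real.pi / (1/(2*(v:ℝ))) = 2 * Real.pi * v := by field_simp
  rw [h1]
  have h2 : (0:ℝ) < Real.sqrt (2 * Real.pi * v) := Real.sqrt_pos.mpr (two_pi_v_pos hv)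
  field_simp

lemma gauss_mul_logb_eq (hv : v ≠ 0) (x : ℝ) :
    gaussianPDFReal 0 v x * Real.logb 2 (gaussianPDFReal 0 v x)
      = (-Real.logb 2 (Real.sqrt (2 * Real.pi * v))) * gaussianPDFReal 0 v x
        - (1/(2*(v:ℝ)*Real.log 2)) * (x ^ 2 * gaussianPDFReal 0 v x) := by
  have hvpos : (0:ℝ) < v := by exact_mod_cast pos_iff_ne_zero.mpr hv
  have hs : (0:ℝ) < Real.sqrt (2 * Real.pi * v) := Real.sqrt_pos.mpr (two_pi_v_pos hv)
  rw [gaussianPDFReal_zero_mean, Real.logb, Real.log_mul (by positivity) (Real.exp_ne_zero _),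
    Real.log_inv, Real.log_exp, Real.logb]
  have hlog2 : (0:ℝ) < Real.log 2 := Real.log_pos (by norm_num)
  field_simp
  ring

lemma integrable_gauss_mul_logb (v : ℝ≥0) :
    Integrable (fun x : ℝ => gaussianPDFReal 0 v x * Real.logb 2 (gaussianPDFReal 0 v x)) := by
  by_cases hv : v = 0
  · simp [hv, gaussianPDFReal_zero_var]
  have h := (((integrable_gaussianPDFReal 0 v).const_mul
      (-Real.logb 2 (Real.sqrt (2 * Real.pi * v)))).sub
      ((integrable_sq_gaussianPDFReal v).const_mul (1/(2*(v:ℝ)*Real.log 2))))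
  apply h.congr
  filter_upwards with x
  exact (gauss_mul_logb_eq hv x).symm

lemma integral_gauss_mul_logb (hv : v ≠ 0) :
    ∫ x : ℝ, gaussianPDFReal 0 v x * Real.logb 2 (gaussianPDFReal 0 v x) = -Hent v := by
  have hvpos : (0:ℝ) < v := by exact_mod_cast pos_iff_ne_zero.mpr hv
  have : (fun x : ℝ => gaussianPDFReal 0 v x * Real.logb 2 (gaussianPDFReal 0 v x))
      = fun x : ℝ => (-Real.logb 2 (Real.sqrt (2 * Real.pi * v))) * gaussianPDFReal 0 v x
        - (1/(2*(v:ℝ)*Real.log 2)) * (x ^ 2 * gaussianPDFReal 0 v x) := by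
    funext x; exact gauss_mul_logb_eq hv x
  rw [this, integral_sub ((integrable_gaussianPDFReal 0 v).const_mul _)
      ((integrable_sq_gaussianPDFReal v).const_mul _),
    MeasureTheory.integral_const_mul, MeasureTheory.integral_const_mul,
    integral_gaussianPDFReal_eq_one 0 hv, integral_sq_gaussianPDFReal hv]
  rw [Hent, Real.logb, Real.logb, Real.log_sqrt (two_pi_v_pos hv).le]
  have hlog2 : Real.log 2 ≠ 0 := ne_of_gt (Real.log_pos (by norm_num))
  field_simp
  ring

section MeasureHelpers

lemma lintegral_comp_affine {f : ℝ → ℝ≥0∞} (hf : Measurable f) {a : ℝ} (ha : a ≠ 0) (b : ℝ) :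
    ∫⁻ x, f (a * x + b) = ENNReal.ofReal |a⁻¹| * ∫⁻ y, f y := by
  have hmap : Measure.map (fun x : ℝ => a * x + b) volume
      = ENNReal.ofReal |a⁻¹| • (volume : Measure ℝ) := by
    have : (fun x : ℝ => a * x + b) = (fun x : ℝ => x + b) ∘ (fun x : ℝ => a * x) := rfl
    rw [this, ← Measure.map_map (measurable_add_const b) (measurable_const_mul a)]
    have h1 : Measure.map (fun x : ℝ => a * x) (volume : Measure ℝ)
        = ENNReal.ofReal |a⁻¹| • volume := Real.map_volume_mul_left ha
    rw [h1, Measure.map_smul, map_add_right_eq_self volume b]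
  calc ∫⁻ x, f (a * x + b)
      = ∫⁻ y, f y ∂(Measure.map (fun x : ℝ => a * x + b) volume) :=
        (lintegral_map hf ((measurable_const_mul a).add_const b)).symm
    _ = ENNReal.ofReal |a⁻¹| * ∫⁻ y, f y := by rw [hmap, lintegral_smul_measure, smul_eq_mul]

lemma gaussian_prod_withDensity {v₁ v₂ : ℝ≥0} (hv₁ : v₁ ≠ 0) (hv₂ : v₂ ≠ 0) :
    (gaussianReal 0 v₁).prod (gaussianReal 0 v₂)
      = (volume.prod volume).withDensity
          (fun p => gaussianPDF 0 v₁ p.1 * gaussianPDF 0 v₂ p.2) := by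
  refine Measure.prod_eq fun s t hs ht => ?_
  rw [withDensity_apply _ (hs.prod ht), ← Measure.prod_restrict,
    lintegral_prod_mul (measurable_gaussianPDF 0 v₁).aemeasurable
      (measurable_gaussianPDF 0 v₂).aemeasurable,
    gaussianReal_of_var_ne_zero 0 hv₁, gaussianReal_of_var_ne_zero 0 hv₂,
    withDensity_apply _ hs, withDensity_apply _ ht]

lemma map_withDensity_equiv {α β : Type*} [MeasurableSpace α] [MeasurableSpace β]
    (e : α ≃ᵐ β) (μ : Measure α) {ρ : α → ℝ≥0∞} (hρ : Measurable ρ) :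
    Measure.map e (μ.withDensity ρ) = (Measure.map e μ).withDensity (fun y => ρ (e.symm y)) := by
  ext A hA
  rw [Measure.map_apply e.measurable hA, withDensity_apply _ (hA.preimage e.measurable),
    withDensity_apply _ hA,
    setLIntegral_map hA (show Measurable fun y => ρ (e.symm y) from hρ.comp e.symm.measurable) e.measurable]
  refine setLIntegral_congr_fun (hA.preimage e.measurable) ?_
  intro x _
  simp

end MeasureHelpers

section Shear

/-- The shear `(u, y) ↦ (u + t y, y)` as a measurable equivalence of `ℝ × ℝ`. -/
noncomputable def shearE (t : ℝ) : (ℝ × ℝ) ≃ᵐ (ℝ × ℝ) where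
  toFun := fun p => (p.1 + t * p.2, p.2)
  invFun := fun p => (p.1 - t * p.2, p.2)
  left_inv := fun p => by simp
  right_inv := fun p => by simp
  measurable_toFun := ((measurable_fst.add (measurable_snd.const_mul t)).prodMk measurable_snd)
  measurable_invFun := ((measurable_fst.sub (measurable_snd.const_mul t)).prodMk measurable_snd)

lemma shearE_apply (t : ℝ) (p : ℝ × ℝ) : shearE t p = (p.1 + t * p.2, p.2) := rfl

lemma shearE_symm_apply (t : ℝ) (p : ℝ × ℝ) : (shearE t).symm p = (p.1 - t * p.2, p.2) := rfl

lemma shearE_measurePreserving (t : ℝ) :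
    MeasurePreserving (shearE t) (volume.prod volume) (volume.prod volume) := by
  refine ⟨(shearE t).measurable, ?_⟩
  refine (Measure.prod_eq fun s s' hs hs' => ?_).symm
  rw [Measure.map_apply (shearE t).measurable (hs.prod hs')]
  have hset : (shearE t) ⁻¹' (s ×ˢ s')
      = {p : ℝ × ℝ | p.1 + t * p.2 ∈ s ∧ p.2 ∈ s'} := rfl
  rw [hset, Measure.prod_apply_symm]
  · classical
    have hslice : ∀ y : ℝ, ((fun x => (x, y)) ⁻¹' {p : ℝ × ℝ | p.1 + t * p.2 ∈ s ∧ p.2 ∈ s'})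
        = if y ∈ s' then (fun x => x + t * y) ⁻¹' s else (∅ : Set ℝ) := by
      intro y
      by_cases hy : y ∈ s' <;> simp [hy, Set.preimage, Set.ext_iff]
    calc ∫⁻ y, volume ((fun x => (x, y)) ⁻¹' {p : ℝ × ℝ | p.1 + t * p.2 ∈ s ∧ p.2 ∈ s'})
        = ∫⁻ y, s'.indicator (fun _ => volume s) y := by
          refine lintegral_congr fun y => ?_
          rw [hslice y]
          by_cases hy : y ∈ s'
          · rw [if_pos hy, Set.indicator_of_mem hy,
              measure_preimage_add_right volume (t * y) s]
          · rw [if_neg hy, Set.indicator_of_notMem hy, measure_empty]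
      _ = volume s * volume s' := by
          rw [lintegral_indicator hs', setLIntegral_const, mul_comm]
  · have heq : {p : ℝ × ℝ | p.1 + t * p.2 ∈ s ∧ p.2 ∈ s'}
        = ((fun p : ℝ × ℝ => p.1 + t * p.2) ⁻¹' s) ∩ ((fun p : ℝ × ℝ => p.2) ⁻¹' s') := by
      ext p; simp [Set.mem_inter_iff]
    rw [heq]
    exact ((measurable_fst.add (measurable_snd.const_mul t)) hs).inter (measurable_snd hs')

end Shear

section GaussFactor

variable {v₁ v₂ : ℝ≥0} {a b c d : ℝ}

lemma gauss_var_key (horth : a*c*(v₁:ℝ) + b*d*(v₂:ℝ) = 0) :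
    (a^2*(v₁:ℝ) + b^2*(v₂:ℝ)) * (c^2*(v₁:ℝ) + d^2*(v₂:ℝ))
      = (a*d - b*c)^2 * (v₁:ℝ) * (v₂:ℝ) := by
  linear_combination (a*c*(v₁:ℝ) + b*d*(v₂:ℝ)) * horth

lemma gauss_factor (hv₁ : v₁ ≠ 0) (hv₂ : v₂ ≠ 0) (ha : a ≠ 0)
    (hΔ : a*d - b*c ≠ 0) (horth : a*c*(v₁:ℝ) + b*d*(v₂:ℝ) = 0) (u w : ℝ) :
    |(a*d - b*c)⁻¹| * gaussianPDFReal 0 v₁ ((d*u - b*w)/(a*d - b*c))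
        * gaussianPDFReal 0 v₂ ((a*w - c*u)/(a*d - b*c))
      = gaussianPDFReal 0 (a^2*(v₁:ℝ) + b^2*(v₂:ℝ)).toNNReal u
        * gaussianPDFReal 0 (c^2*(v₁:ℝ) + d^2*(v₂:ℝ)).toNNReal w := by
  have hv₁R : (0:ℝ) < v₁ := by exact_mod_cast pos_iff_ne_zero.mpr hv₁
  have hv₂R : (0:ℝ) < v₂ := by exact_mod_cast pos_iff_ne_zero.mpr hv₂
  set Δ : ℝ := a*d - b*c with hΔdef
  set A : ℝ := a^2*(v₁:ℝ) + b^2*(v₂:ℝ) with hAdef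
  set C : ℝ := c^2*(v₁:ℝ) + d^2*(v₂:ℝ) with hCdef
  have hA : 0 < A := by
    have : 0 < a^2*(v₁:ℝ) := by positivity
    nlinarith [mul_nonneg (sq_nonneg b) hv₂R.le]
  have key : A * C = Δ^2 * (v₁:ℝ) * (v₂:ℝ) := gauss_var_key horth
  have hC : 0 < C := by
    by_contra hc
    push_neg at hc
    have hΔsq : 0 < Δ^2 := by positivity
    nlinarith [mul_pos hv₁R hv₂R]
  have cA : ((A.toNNReal : ℝ≥0) : ℝ) = A := Real.coe_toNNReal _ hA.le
  have cC : ((C.toNNReal : ℝ≥0) : ℝ) = C := Real.coe_toNNReal _ hC.le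
  have hpoly : (v₂:ℝ)*(d*u - b*w)^2 + (v₁:ℝ)*(a*w - c*u)^2 = u^2*C + w^2*A := by
    rw [hAdef, hCdef]
    linear_combination (-2*u*w) * horth
  simp only [gaussianPDFReal, sub_zero, cA, cC]
  have hexp : -((d*u - b*w)/Δ)^2/(2*(v₁:ℝ)) + -((a*w - c*u)/Δ)^2/(2*(v₂:ℝ))
      = -u^2/(2*A) + -w^2/(2*C) := by
    have h2 : -((d*u - b*w)/Δ)^2/(2*(v₁:ℝ)) + -((a*w - c*u)/Δ)^2/(2*(v₂:ℝ))
        = -(((v₂:ℝ)*(d*u - b*w)^2 + (v₁:ℝ)*(a*w - c*u)^2))/(2*(v₁:ℝ)*(v₂:ℝ)*Δ^2) := by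
      field_simp
      ring
    rw [h2, hpoly]
    have h4 : 2*(v₁:ℝ)*(v₂:ℝ)*Δ^2 = 2*(A*C) := by rw [key]; ring
    rw [h4]
    field_simp
    ring
  have h3 : Real.sqrt (2*Real.pi*A) * Real.sqrt (2*Real.pi*C)
      = |Δ| * (Real.sqrt (2*Real.pi*(v₁:ℝ)) * Real.sqrt (2*Real.pi*(v₂:ℝ))) := by
    rw [← Real.sqrt_mul (by positivity) (2*Real.pi*C),
      ← Real.sqrt_mul (by positivity) (2*Real.pi*(v₂:ℝ)),
      show (2*Real.pi*A)*(2*Real.pi*C) = Δ^2 * ((2*Real.pi*(v₁:ℝ))*(2*Real.pi*(v₂:ℝ))) by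
        rw [show (2*Real.pi*A)*(2*Real.pi*C) = (2*Real.pi)^2*(A*C) by ring, key]; ring,
      Real.sqrt_mul (sq_nonneg Δ), Real.sqrt_sq_eq_abs]
  have hs₁ : (0:ℝ) < Real.sqrt (2*Real.pi*(v₁:ℝ)) := Real.sqrt_pos.mpr (by positivity)
  have hs₂ : (0:ℝ) < Real.sqrt (2*Real.pi*(v₂:ℝ)) := Real.sqrt_pos.mpr (by positivity)
  have hsA : (0:ℝ) < Real.sqrt (2*Real.pi*A) := Real.sqrt_pos.mpr (by positivity)
  have hsC : (0:ℝ) < Real.sqrt (2*Real.pi*C) := Real.sqrt_pos.mpr (by positivity)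
  have hΔabs : (0:ℝ) < |Δ| := abs_pos.mpr hΔ
  calc |Δ⁻¹| * ((Real.sqrt (2*Real.pi*(v₁:ℝ)))⁻¹ * Real.exp (-((d*u - b*w)/Δ)^2/(2*(v₁:ℝ))))
        * ((Real.sqrt (2*Real.pi*(v₂:ℝ)))⁻¹ * Real.exp (-((a*w - c*u)/Δ)^2/(2*(v₂:ℝ))))
      = (|Δ|⁻¹ * (Real.sqrt (2*Real.pi*(v₁:ℝ)))⁻¹ * (Real.sqrt (2*Real.pi*(v₂:ℝ)))⁻¹)
        * Real.exp (-((d*u - b*w)/Δ)^2/(2*(v₁:ℝ)) + -((a*w - c*u)/Δ)^2/(2*(v₂:ℝ))) := by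
        rw [Real.exp_add, abs_inv]; ring
    _ = ((Real.sqrt (2*Real.pi*A))⁻¹ * (Real.sqrt (2*Real.pi*C))⁻¹)
        * Real.exp (-u^2/(2*A) + -w^2/(2*C)) := by
        rw [hexp]
        congr 1
        rw [← mul_inv, ← mul_inv, ← mul_inv, h3, mul_assoc]
    _ = (Real.sqrt (2*Real.pi*A))⁻¹ * Real.exp (-u^2/(2*A))
        * ((Real.sqrt (2*Real.pi*C))⁻¹ * Real.exp (-w^2/(2*C))) := by
        rw [Real.exp_add]; ring

end GaussFactor

section Lin2

lemma lintegral_indicator_mul_gaussianPDF {v : ℝ≥0} (hv : v ≠ 0) {s : Set ℝ}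
    (hs : MeasurableSet s) :
    ∫⁻ u, s.indicator (1 : ℝ → ℝ≥0∞) u * gaussianPDF 0 v u = gaussianReal 0 v s := by
  rw [gaussianReal_of_var_ne_zero 0 hv, withDensity_apply _ hs, ← lintegral_indicator hs]
  refine lintegral_congr fun u => ?_
  by_cases hu : u ∈ s <;> simp [hu]

lemma map_lin2 {v₁ v₂ : ℝ≥0} (hv₁ : v₁ ≠ 0) (hv₂ : v₂ ≠ 0) {a b c d : ℝ} (ha : a ≠ 0)
    (hΔ : a*d - b*c ≠ 0) (horth : a*c*(v₁:ℝ) + b*d*(v₂:ℝ) = 0) :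
    Measure.map (fun p : ℝ × ℝ => (a*p.1 + b*p.2, c*p.1 + d*p.2))
        ((gaussianReal 0 v₁).prod (gaussianReal 0 v₂))
      = (gaussianReal 0 (a^2*(v₁:ℝ) + b^2*(v₂:ℝ)).toNNReal).prod
          (gaussianReal 0 (c^2*(v₁:ℝ) + d^2*(v₂:ℝ)).toNNReal) := by
  have hv₁R : (0:ℝ) < v₁ := by exact_mod_cast pos_iff_ne_zero.mpr hv₁
  have hv₂R : (0:ℝ) < v₂ := by exact_mod_cast pos_iff_ne_zero.mpr hv₂
  set Δ : ℝ := a*d - b*c with hΔdef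
  have hA : (0:ℝ) < a^2*(v₁:ℝ) + b^2*(v₂:ℝ) := by
    have h1 : 0 < a^2*(v₁:ℝ) := by positivity
    nlinarith [mul_nonneg (sq_nonneg b) hv₂R.le]
  have key := gauss_var_key (v₁ := v₁) (v₂ := v₂) (a := a) (b := b) (c := c) (d := d) horth
  have hC : (0:ℝ) < c^2*(v₁:ℝ) + d^2*(v₂:ℝ) := by
    by_contra hc
    push_neg at hc
    have hΔ' : a*d - b*c ≠ 0 := by rw [← hΔdef]; exact hΔ
    have h2 : 0 < (a*d - b*c)^2 * (v₁:ℝ) * (v₂:ℝ) := by positivity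
    have h1 : (a^2*(v₁:ℝ)+b^2*(v₂:ℝ)) * (c^2*(v₁:ℝ)+d^2*(v₂:ℝ)) ≤ 0 :=
      mul_nonpos_of_nonneg_of_nonpos hA.le hc
    linarith [key]
  have hA' : (a^2*(v₁:ℝ) + b^2*(v₂:ℝ)).toNNReal ≠ 0 := by
    simp only [ne_eq, Real.toNNReal_eq_zero, not_le]
    exact hA
  have hC' : (c^2*(v₁:ℝ) + d^2*(v₂:ℝ)).toNNReal ≠ 0 := by
    simp only [ne_eq, Real.toNNReal_eq_zero, not_le]
    exact hC
  have hT : Measurable (fun p : ℝ × ℝ => (a*p.1 + b*p.2, c*p.1 + d*p.2)) :=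
    ((measurable_fst.const_mul a).add (measurable_snd.const_mul b)).prodMk
      ((measurable_fst.const_mul c).add (measurable_snd.const_mul d))
  refine (Measure.prod_eq fun s t hs ht => ?_).symm
  rw [Measure.map_apply hT (hs.prod ht), gaussian_prod_withDensity hv₁ hv₂,
    withDensity_apply _ (hT (hs.prod ht)), ← lintegral_indicator (hT (hs.prod ht))]
  -- rewrite the indicator of the preimage
  have hind : ∀ p : ℝ × ℝ,
      ((fun p : ℝ × ℝ => (a*p.1 + b*p.2, c*p.1 + d*p.2)) ⁻¹' (s ×ˢ t)).indicator
        (fun p => gaussianPDF 0 v₁ p.1 * gaussianPDF 0 v₂ p.2) p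
      = s.indicator 1 (a*p.1 + b*p.2) * t.indicator 1 (c*p.1 + d*p.2)
          * (gaussianPDF 0 v₁ p.1 * gaussianPDF 0 v₂ p.2) := by
    intro p
    by_cases h1 : a*p.1 + b*p.2 ∈ s <;> by_cases h2 : c*p.1 + d*p.2 ∈ t <;>
      simp [Set.indicator, Set.mem_prod, h1, h2]
  rw [lintegral_congr hind]
  -- measurability facts
  have hindS : Measurable (s.indicator (1 : ℝ → ℝ≥0∞)) := measurable_one.indicator hs
  have hindT : Measurable (t.indicator (1 : ℝ → ℝ≥0∞)) := measurable_one.indicator ht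
  have hφ₁ : Measurable (gaussianPDF 0 v₁) := measurable_gaussianPDF 0 v₁
  have hφ₂ : Measurable (gaussianPDF 0 v₂) := measurable_gaussianPDF 0 v₂
  have hF : Measurable (fun p : ℝ × ℝ => s.indicator 1 (a*p.1 + b*p.2)
      * t.indicator 1 (c*p.1 + d*p.2) * (gaussianPDF 0 v₁ p.1 * gaussianPDF 0 v₂ p.2)) := by
    refine Measurable.mul (Measurable.mul ?_ ?_) (Measurable.fun_mul ?_ ?_)
    · exact hindS.comp ((measurable_fst.const_mul a).add (measurable_snd.const_mul b))
    · exact hindT.comp ((measurable_fst.const_mul c).add (measurable_snd.const_mul d))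
    · exact hφ₁.comp measurable_fst
    · exact hφ₂.comp measurable_snd
  rw [MeasureTheory.lintegral_prod _ hF.aemeasurable]
  rw [lintegral_lintegral_swap (by exact hF.aemeasurable)]
  -- first substitution: x ↦ a x + b y
  have step1 : ∀ y : ℝ,
      ∫⁻ x, s.indicator 1 (a*x + b*y) * t.indicator 1 (c*x + d*y)
          * (gaussianPDF 0 v₁ x * gaussianPDF 0 v₂ y)
      = ENNReal.ofReal |a⁻¹| * ∫⁻ u, s.indicator 1 u * t.indicator 1 ((c*u + Δ*y)/a)
          * (gaussianPDF 0 v₁ ((u - b*y)/a) * gaussianPDF 0 v₂ y) := by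
    intro y
    have hmeas : Measurable (fun u : ℝ => s.indicator 1 u * t.indicator 1 ((c*u + Δ*y)/a)
        * (gaussianPDF 0 v₁ ((u - b*y)/a) * gaussianPDF 0 v₂ y)) := by
      refine ((hindS.mul (hindT.comp ?_)).mul ((hφ₁.comp ?_).mul measurable_const))
      · exact (measurable_id.const_mul c).add_const (Δ*y) |>.div_const a
      · exact (measurable_id.sub_const (b*y)).div_const a
    rw [← lintegral_comp_affine hmeas ha (b*y)]
    refine lintegral_congr fun x => ?_
    have e1 : (c*(a*x + b*y) + Δ*y)/a = c*x + d*y := by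
      rw [hΔdef]; field_simp; ring
    have e2 : ((a*x + b*y) - b*y)/a = x := by field_simp; ring
    rw [e1, e2]
  rw [lintegral_congr step1, lintegral_const_mul' _ _ ENNReal.ofReal_ne_top]
  have hG : Measurable (fun q : ℝ × ℝ => s.indicator 1 q.2 * t.indicator 1 ((c*q.2 + Δ*q.1)/a)
      * (gaussianPDF 0 v₁ ((q.2 - b*q.1)/a) * gaussianPDF 0 v₂ q.1)) := by
    refine Measurable.mul (Measurable.mul ?_ ?_) (Measurable.fun_mul ?_ ?_)
    · exact hindS.comp measurable_snd
    · exact hindT.comp (((measurable_snd.const_mul c).add (measurable_fst.const_mul Δ)).div_const a)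
    · exact hφ₁.comp ((measurable_snd.sub (measurable_fst.const_mul b)).div_const a)
    · exact hφ₂.comp measurable_fst
  rw [lintegral_lintegral_swap (by exact hG.aemeasurable)]
  -- second substitution: y ↦ (Δ/a) y + (c u)/a
  have hΔa : Δ/a ≠ 0 := div_ne_zero hΔ ha
  have step2 : ∀ u : ℝ,
      ∫⁻ y, s.indicator 1 u * t.indicator 1 ((c*u + Δ*y)/a)
          * (gaussianPDF 0 v₁ ((u - b*y)/a) * gaussianPDF 0 v₂ y)
      = ENNReal.ofReal |(Δ/a)⁻¹| * ∫⁻ w, s.indicator 1 u * t.indicator 1 w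
          * (gaussianPDF 0 v₁ ((d*u - b*w)/Δ) * gaussianPDF 0 v₂ ((a*w - c*u)/Δ)) := by
    intro u
    have hmeas : Measurable (fun w : ℝ => s.indicator 1 u * t.indicator 1 w
        * (gaussianPDF 0 v₁ ((d*u - b*w)/Δ) * gaussianPDF 0 v₂ ((a*w - c*u)/Δ))) := by
      refine ((measurable_const.mul hindT).mul ((hφ₁.comp ?_).mul (hφ₂.comp ?_)))
      · exact ((measurable_const.sub (measurable_id.const_mul b)).div_const Δ)
      · exact ((measurable_id.const_mul a).sub_const (c*u) |>.div_const Δ)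
    rw [← lintegral_comp_affine hmeas hΔa ((c*u)/a)]
    refine lintegral_congr fun y => ?_
    have e1 : (Δ/a*y + c*u/a) = (c*u + Δ*y)/a := by field_simp; ring
    have e2 : (d*u - b*(Δ/a*y + c*u/a))/Δ = (u - b*y)/a := by
      field_simp; rw [hΔdef]; ring
    have e3 : (a*(Δ/a*y + c*u/a) - c*u)/Δ = y := by field_simp; ring
    rw [e2, e3, e1]
  rw [lintegral_congr step2, lintegral_const_mul' _ _ ENNReal.ofReal_ne_top, ← mul_assoc,
    ← ENNReal.ofReal_mul (abs_nonneg _)]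
  have habs : |a⁻¹| * |(Δ/a)⁻¹| = |Δ⁻¹| := by
    rw [← abs_mul]
    congr 1
    field_simp
  rw [habs]
  -- now apply the pointwise gaussian factorisation
  have hgf : ∀ u w : ℝ, ENNReal.ofReal |Δ⁻¹|
        * (gaussianPDF 0 v₁ ((d*u - b*w)/Δ) * gaussianPDF 0 v₂ ((a*w - c*u)/Δ))
      = gaussianPDF 0 (a^2*(v₁:ℝ) + b^2*(v₂:ℝ)).toNNReal u
        * gaussianPDF 0 (c^2*(v₁:ℝ) + d^2*(v₂:ℝ)).toNNReal w := by
    intro u w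
    rw [gaussianPDF, gaussianPDF, gaussianPDF, gaussianPDF,
      ← ENNReal.ofReal_mul (gaussianPDFReal_nonneg _ _ _),
      ← ENNReal.ofReal_mul (abs_nonneg _),
      ← ENNReal.ofReal_mul (gaussianPDFReal_nonneg _ _ _)]
    exact congrArg ENNReal.ofReal
      (by rw [← mul_assoc]; exact gauss_factor hv₁ hv₂ ha hΔ horth u w)
  calc ENNReal.ofReal |Δ⁻¹| * ∫⁻ u, ∫⁻ w, s.indicator 1 u * t.indicator 1 w
          * (gaussianPDF 0 v₁ ((d*u - b*w)/Δ) * gaussianPDF 0 v₂ ((a*w - c*u)/Δ))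
      = ∫⁻ u, ∫⁻ w, (s.indicator 1 u * gaussianPDF 0 (a^2*(v₁:ℝ) + b^2*(v₂:ℝ)).toNNReal u)
          * (t.indicator 1 w * gaussianPDF 0 (c^2*(v₁:ℝ) + d^2*(v₂:ℝ)).toNNReal w) := by
        rw [← lintegral_const_mul' _ _ ENNReal.ofReal_ne_top]
        refine lintegral_congr fun u => ?_
        rw [← lintegral_const_mul' _ _ ENNReal.ofReal_ne_top]
        refine lintegral_congr fun w => ?_
        rw [show ENNReal.ofReal |Δ⁻¹| * (s.indicator 1 u * t.indicator 1 w
              * (gaussianPDF 0 v₁ ((d*u - b*w)/Δ) * gaussianPDF 0 v₂ ((a*w - c*u)/Δ)))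
            = (s.indicator 1 u * t.indicator 1 w) * (ENNReal.ofReal |Δ⁻¹|
              * (gaussianPDF 0 v₁ ((d*u - b*w)/Δ) * gaussianPDF 0 v₂ ((a*w - c*u)/Δ))) by ring,
          hgf u w]
        ring
    _ = (∫⁻ u, s.indicator 1 u * gaussianPDF 0 (a^2*(v₁:ℝ) + b^2*(v₂:ℝ)).toNNReal u)
          * ∫⁻ w, t.indicator 1 w * gaussianPDF 0 (c^2*(v₁:ℝ) + d^2*(v₂:ℝ)).toNNReal w := by
        rw [← lintegral_mul_const _ (hindS.fun_mul (measurable_gaussianPDF _ _))]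
        refine lintegral_congr fun u => ?_
        rw [lintegral_const_mul _ (hindT.fun_mul (measurable_gaussianPDF _ _))]
    _ = gaussianReal 0 (a^2*(v₁:ℝ) + b^2*(v₂:ℝ)).toNNReal s
          * gaussianReal 0 (c^2*(v₁:ℝ) + d^2*(v₂:ℝ)).toNNReal t := by
        rw [lintegral_indicator_mul_gaussianPDF hA' hs,
          lintegral_indicator_mul_gaussianPDF hC' ht]

end Lin2

section RV

variable {Ω : Type*} [MeasureSpace Ω] [IsProbabilityMeasure (volume : Measure Ω)]

lemma map_pair_lin {X Z : Ω → ℝ} (hX : Measurable X) (hZ : Measurable Z)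
    (hXZ : IndepFun X Z) {v₁ v₂ : ℝ≥0} (hv₁ : v₁ ≠ 0) (hv₂ : v₂ ≠ 0)
    (hlX : Measure.map X volume = gaussianReal 0 v₁)
    (hlZ : Measure.map Z volume = gaussianReal 0 v₂)
    {a b c d : ℝ} (ha : a ≠ 0) (hΔ : a*d - b*c ≠ 0)
    (horth : a*c*(v₁:ℝ) + b*d*(v₂:ℝ) = 0) :
    Measure.map (fun ω => (a*X ω + b*Z ω, c*X ω + d*Z ω)) volume
      = (gaussianReal 0 (a^2*(v₁:ℝ) + b^2*(v₂:ℝ)).toNNReal).prod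
          (gaussianReal 0 (c^2*(v₁:ℝ) + d^2*(v₂:ℝ)).toNNReal) := by
  have hmap : Measure.map (fun ω => (X ω, Z ω)) volume
      = (gaussianReal 0 v₁).prod (gaussianReal 0 v₂) := by
    rw [(indepFun_iff_map_prod_eq_prod_map_map hX.aemeasurable hZ.aemeasurable).mp hXZ,
      hlX, hlZ]
  have hT : Measurable (fun p : ℝ × ℝ => (a*p.1 + b*p.2, c*p.1 + d*p.2)) :=
    ((measurable_fst.const_mul a).add (measurable_snd.const_mul b)).prodMk
      ((measurable_fst.const_mul c).add (measurable_snd.const_mul d))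
  have hcomp : (fun ω => (a*X ω + b*Z ω, c*X ω + d*Z ω))
      = (fun p : ℝ × ℝ => (a*p.1 + b*p.2, c*p.1 + d*p.2)) ∘ (fun ω => (X ω, Z ω)) := rfl
  rw [hcomp, ← Measure.map_map hT (hX.prodMk hZ), hmap, map_lin2 hv₁ hv₂ ha hΔ horth]

lemma map_fst_lin {X Z : Ω → ℝ} (hX : Measurable X) (hZ : Measurable Z)
    (hXZ : IndepFun X Z) {v₁ v₂ : ℝ≥0} (hv₁ : v₁ ≠ 0) (hv₂ : v₂ ≠ 0)
    (hlX : Measure.map X volume = gaussianReal 0 v₁)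
    (hlZ : Measure.map Z volume = gaussianReal 0 v₂)
    {a b c d : ℝ} (ha : a ≠ 0) (hΔ : a*d - b*c ≠ 0)
    (horth : a*c*(v₁:ℝ) + b*d*(v₂:ℝ) = 0) :
    Measure.map (fun ω => a*X ω + b*Z ω) volume
      = gaussianReal 0 (a^2*(v₁:ℝ) + b^2*(v₂:ℝ)).toNNReal := by
  have h := map_pair_lin hX hZ hXZ hv₁ hv₂ hlX hlZ ha hΔ horth
  have hcomp : (fun ω => a*X ω + b*Z ω)
      = Prod.fst ∘ (fun ω => (a*X ω + b*Z ω, c*X ω + d*Z ω)) := rfl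
  have hTm : Measurable (fun ω => (a*X ω + b*Z ω, c*X ω + d*Z ω)) :=
    (((hX.const_mul a).add (hZ.const_mul b)).prodMk ((hX.const_mul c).add (hZ.const_mul d)))
  rw [hcomp, ← Measure.map_map measurable_fst hTm, h, Measure.map_fst_prod, measure_univ,
    one_smul]

lemma map_add_gaussian {W B : Ω → ℝ} (hW : Measurable W) (hB : Measurable B)
    (hInd : IndepFun W B) {w₁ w₂ : ℝ≥0} (h₁ : w₁ ≠ 0) (h₂ : w₂ ≠ 0)
    (hlW : Measure.map W volume = gaussianReal 0 w₁)
    (hlB : Measure.map B volume = gaussianReal 0 w₂) :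
    Measure.map (fun ω => W ω + B ω) volume = gaussianReal 0 ((w₁:ℝ) + (w₂:ℝ)).toNNReal := by
  have h₁R : (0:ℝ) < w₁ := by exact_mod_cast pos_iff_ne_zero.mpr h₁
  have h₂R : (0:ℝ) < w₂ := by exact_mod_cast pos_iff_ne_zero.mpr h₂
  have h := map_pair_lin hW hB hInd h₁ h₂ hlW hlB (a := (w₂:ℝ)) (b := -(w₁:ℝ)) (c := 1) (d := 1)
    (by positivity) (by simp; positivity) (by ring)
  have hcomp : (fun ω => W ω + B ω)
      = Prod.snd ∘ (fun ω => ((w₂:ℝ)*W ω + (-(w₁:ℝ))*B ω, 1*W ω + 1*B ω)) := by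
    funext ω; simp
  have hTm : Measurable (fun ω => ((w₂:ℝ)*W ω + (-(w₁:ℝ))*B ω, 1*W ω + 1*B ω)) :=
    (((hW.const_mul _).add (hB.const_mul _)).prodMk ((hW.const_mul 1).add (hB.const_mul 1)))
  rw [hcomp, ← Measure.map_map measurable_snd hTm, h, Measure.map_snd_prod, measure_univ,
    one_smul]
  norm_num

omit [IsProbabilityMeasure (volume : Measure Ω)] in
lemma pdf_of_law_gaussian {W : Ω → ℝ} {v : ℝ≥0}
    (hl : Measure.map W volume = gaussianReal 0 v) :
    pdf W volume volume =ᵐ[volume] gaussianPDF 0 v := by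
  rw [pdf_def, hl]
  exact rnDeriv_gaussianReal 0 v

end RV

section Ent

variable {Ω : Type*} [MeasureSpace Ω] [IsProbabilityMeasure (volume : Measure Ω)]

omit [IsProbabilityMeasure (volume : Measure Ω)] in
lemma dEnt_gaussian {W : Ω → ℝ} {v : ℝ≥0} (hv : v ≠ 0)
    (hl : Measure.map W volume = gaussianReal 0 v) :
    dEnt (volume : Measure ℝ) W = Hent v := by
  rw [dEnt]
  have hpdf := pdf_of_law_gaussian hl
  have hae : (fun x => (pdf W volume volume x).toReal
        * Real.logb 2 (pdf W volume volume x).toReal)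
      =ᵐ[(volume : Measure ℝ)]
        fun x => gaussianPDFReal 0 v x * Real.logb 2 (gaussianPDFReal 0 v x) := by
    filter_upwards [hpdf] with x hx
    rw [hx, gaussianPDF, ENNReal.toReal_ofReal (gaussianPDFReal_nonneg _ _ _)]
  rw [integral_congr_ae hae, integral_gauss_mul_logb hv, neg_neg]

lemma law_pair_shear {W B : Ω → ℝ} (hW : Measurable W) (hB : Measurable B)
    (hInd : IndepFun W B) {v₁ v₂ : ℝ≥0} (hv₁ : v₁ ≠ 0) (hv₂ : v₂ ≠ 0)
    (hlW : Measure.map W volume = gaussianReal 0 v₁)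
    (hlB : Measure.map B volume = gaussianReal 0 v₂) (t : ℝ) :
    Measure.map (fun ω => (W ω + t * B ω, B ω)) volume
      = (volume.prod volume).withDensity
          (fun p => gaussianPDF 0 v₁ (p.1 - t*p.2) * gaussianPDF 0 v₂ p.2) := by
  have hmap : Measure.map (fun ω => (W ω, B ω)) volume
      = (gaussianReal 0 v₁).prod (gaussianReal 0 v₂) := by
    rw [(indepFun_iff_map_prod_eq_prod_map_map hW.aemeasurable hB.aemeasurable).mp hInd,
      hlW, hlB]
  have hρ : Measurable (fun p : ℝ × ℝ => gaussianPDF 0 v₁ p.1 * gaussianPDF 0 v₂ p.2) :=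
    ((measurable_gaussianPDF 0 v₁).comp measurable_fst).mul
      ((measurable_gaussianPDF 0 v₂).comp measurable_snd)
  have hcomp : (fun ω => (W ω + t * B ω, B ω)) = (shearE t) ∘ (fun ω => (W ω, B ω)) := rfl
  rw [hcomp, ← Measure.map_map (shearE t).measurable (hW.prodMk hB), hmap,
    gaussian_prod_withDensity hv₁ hv₂, map_withDensity_equiv (shearE t) _ hρ,
    (shearE_measurePreserving t).map_eq]
  rfl

lemma dEnt_pair_shear {W B : Ω → ℝ} (hW : Measurable W) (hB : Measurable B)
    (hInd : IndepFun W B) {v₁ v₂ : ℝ≥0} (hv₁ : v₁ ≠ 0) (hv₂ : v₂ ≠ 0)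
    (hlW : Measure.map W volume = gaussianReal 0 v₁)
    (hlB : Measure.map B volume = gaussianReal 0 v₂) (t : ℝ) :
    dEnt (volume : Measure (ℝ × ℝ)) (fun ω => (W ω + t * B ω, B ω)) = Hent v₁ + Hent v₂ := by
  have hv₁R : (0:ℝ) < v₁ := by exact_mod_cast pos_iff_ne_zero.mpr hv₁
  have hv₂R : (0:ℝ) < v₂ := by exact_mod_cast pos_iff_ne_zero.mpr hv₂
  have hρ : Measurable (fun p : ℝ × ℝ => gaussianPDF 0 v₁ (p.1 - t*p.2) * gaussianPDF 0 v₂ p.2) :=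
    ((measurable_gaussianPDF 0 v₁).comp
        ((measurable_fst.sub (measurable_snd.const_mul t)))).mul
      ((measurable_gaussianPDF 0 v₂).comp measurable_snd)
  have hlaw := law_pair_shear hW hB hInd hv₁ hv₂ hlW hlB t
  have hpdf : pdf (fun ω => (W ω + t * B ω, B ω)) volume (volume : Measure (ℝ × ℝ))
      =ᵐ[(volume : Measure (ℝ × ℝ))]
        fun p => gaussianPDF 0 v₁ (p.1 - t*p.2) * gaussianPDF 0 v₂ p.2 := by
    rw [pdf_def, hlaw, Measure.volume_eq_prod]
    exact Measure.rnDeriv_withDensity _ hρ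
  rw [dEnt]
  have hae : (fun p : ℝ × ℝ => (pdf (fun ω => (W ω + t * B ω, B ω)) volume volume p).toReal
        * Real.logb 2 (pdf (fun ω => (W ω + t * B ω, B ω)) volume volume p).toReal)
      =ᵐ[(volume : Measure (ℝ × ℝ))]
        fun p => (gaussianPDFReal 0 v₁ (p.1 - t*p.2) * gaussianPDFReal 0 v₂ p.2)
          * Real.logb 2 (gaussianPDFReal 0 v₁ (p.1 - t*p.2) * gaussianPDFReal 0 v₂ p.2) := by
    filter_upwards [hpdf] with p hp
    rw [hp, gaussianPDF, gaussianPDF, ← ENNReal.ofReal_mul (gaussianPDFReal_nonneg _ _ _),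
      ENNReal.toReal_ofReal (mul_nonneg (gaussianPDFReal_nonneg _ _ _)
        (gaussianPDFReal_nonneg _ _ _))]
  rw [integral_congr_ae hae, Measure.volume_eq_prod,
    ← (shearE_measurePreserving t).integral_comp']
  have hptwise : ∀ p : ℝ × ℝ,
      (gaussianPDFReal 0 v₁ ((shearE t p).1 - t*(shearE t p).2)
          * gaussianPDFReal 0 v₂ (shearE t p).2)
        * Real.logb 2 (gaussianPDFReal 0 v₁ ((shearE t p).1 - t*(shearE t p).2)
          * gaussianPDFReal 0 v₂ (shearE t p).2)
      = (gaussianPDFReal 0 v₁ p.1 * Real.logb 2 (gaussianPDFReal 0 v₁ p.1))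
          * gaussianPDFReal 0 v₂ p.2
        + gaussianPDFReal 0 v₁ p.1
          * (gaussianPDFReal 0 v₂ p.2 * Real.logb 2 (gaussianPDFReal 0 v₂ p.2)) := by
    intro p
    rw [shearE_apply]
    simp only [add_sub_cancel_right]
    rw [Real.logb, Real.log_mul (gaussianPDFReal_pos 0 v₁ p.1 hv₁).ne'
      (gaussianPDFReal_pos 0 v₂ p.2 hv₂).ne', Real.logb, Real.logb]
    ring
  rw [integral_congr_ae (Filter.Eventually.of_forall hptwise)]
  rw [integral_add
    ((integrable_gauss_mul_logb v₁).mul_prod (integrable_gaussianPDFReal 0 v₂))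
    ((integrable_gaussianPDFReal 0 v₁).mul_prod (integrable_gauss_mul_logb v₂)),
    integral_prod_mul (f := fun x => gaussianPDFReal 0 v₁ x * Real.logb 2 (gaussianPDFReal 0 v₁ x))
      (g := gaussianPDFReal 0 v₂),
    integral_prod_mul (f := gaussianPDFReal 0 v₁)
      (g := fun y => gaussianPDFReal 0 v₂ y * Real.logb 2 (gaussianPDFReal 0 v₂ y)),
    integral_gauss_mul_logb hv₁,
    integral_gauss_mul_logb hv₂, integral_gaussianPDFReal_eq_one 0 hv₁,
    integral_gaussianPDFReal_eq_one 0 hv₂]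
  ring

end Ent

section IndepAssoc

variable {Ω : Type*} [MeasureSpace Ω] [IsProbabilityMeasure (volume : Measure Ω)]

lemma indepFun_pair_right {A B C : Ω → ℝ} (hA : Measurable A) (hB : Measurable B)
    (hC : Measurable C) (hAB : IndepFun A B) (hABC : IndepFun (fun ω => (A ω, B ω)) C)
    (hBC : IndepFun B C) : IndepFun A (fun ω => (B ω, C ω)) := by
  haveI : IsProbabilityMeasure (Measure.map A volume) :=
    Measure.isProbabilityMeasure_map hA.aemeasurable
  haveI : IsProbabilityMeasure (Measure.map B volume) :=
    Measure.isProbabilityMeasure_map hB.aemeasurable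
  haveI : IsProbabilityMeasure (Measure.map C volume) :=
    Measure.isProbabilityMeasure_map hC.aemeasurable
  rw [indepFun_iff_map_prod_eq_prod_map_map hA.aemeasurable
    (hB.prodMk hC).aemeasurable]
  have h1 : Measure.map (fun ω => ((A ω, B ω), C ω)) volume
      = (Measure.map (fun ω => (A ω, B ω)) volume).prod (Measure.map C volume) :=
    (indepFun_iff_map_prod_eq_prod_map_map (hA.prodMk hB).aemeasurable
      hC.aemeasurable).mp hABC
  have h2 : Measure.map (fun ω => (A ω, B ω)) volume
      = (Measure.map A volume).prod (Measure.map B volume) :=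
    (indepFun_iff_map_prod_eq_prod_map_map hA.aemeasurable hB.aemeasurable).mp hAB
  have h3 : Measure.map (fun ω => (B ω, C ω)) volume
      = (Measure.map B volume).prod (Measure.map C volume) :=
    (indepFun_iff_map_prod_eq_prod_map_map hB.aemeasurable hC.aemeasurable).mp hBC
  have hcomp : (fun ω => (A ω, (B ω, C ω)))
      = (MeasurableEquiv.prodAssoc : (ℝ × ℝ) × ℝ ≃ᵐ ℝ × ℝ × ℝ)
        ∘ (fun ω => ((A ω, B ω), C ω)) := rfl
  rw [hcomp, ← Measure.map_map MeasurableEquiv.prodAssoc.measurable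
    ((hA.prodMk hB).prodMk hC), h1, h2, Measure.prodAssoc_prod, h3]

end IndepAssoc

/-- Costa's dirty-paper coding identity: with `t = P/(P+σ_Z²)`, the estimation error
`U − tY` is independent of `(X+Z, S)`, and `I(U;Y) − I(U;S) = ½ log₂(1+P/σ_Z²)`. -/
theorem costa_dirty_paper {Ω : Type*} [MeasureSpace Ω]
    [IsProbabilityMeasure (volume : Measure Ω)]
    (X Z S : Ω → ℝ) (hX : Measurable X) (hZ : Measurable Z) (hS : Measurable S)
    (P σZ σS : NNReal) (hP : 0 < P) (hσZ : 0 < σZ) (hσS : 0 < σS)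
    (hXZ : IndepFun X Z)
    (hXZS : IndepFun (fun ω => (X ω, Z ω)) S)
    (hlX : Measure.map X volume = gaussianReal 0 P)
    (hlZ : Measure.map Z volume = gaussianReal 0 σZ)
    (hlS : Measure.map S volume = gaussianReal 0 σS) :
    IndepFun
        (fun ω => (X ω + ((P : ℝ) / ((P : ℝ) + (σZ : ℝ))) * S ω)
          - ((P : ℝ) / ((P : ℝ) + (σZ : ℝ))) * (X ω + Z ω + S ω))
        (fun ω => (X ω + Z ω, S ω))
    ∧ dMI (fun ω => X ω + ((P : ℝ) / ((P : ℝ) + (σZ : ℝ))) * S ω)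
          (fun ω => X ω + Z ω + S ω)
        - dMI (fun ω => X ω + ((P : ℝ) / ((P : ℝ) + (σZ : ℝ))) * S ω) S
      = (1 / 2) * Real.logb 2 (1 + (P : ℝ) / (σZ : ℝ)) := by
  have hPpos : (0:ℝ) < P := by exact_mod_cast hP
  have hZpos : (0:ℝ) < σZ := by exact_mod_cast hσZ
  have hSpos : (0:ℝ) < σS := by exact_mod_cast hσS
  have hPZ : (0:ℝ) < (P:ℝ) + (σZ:ℝ) := by linarith
  set t : ℝ := (P:ℝ) / ((P:ℝ) + (σZ:ℝ)) with ht
  -- basic coefficient facts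
  have h1t : 1 - t = (σZ:ℝ) / ((P:ℝ) + (σZ:ℝ)) := by rw [ht]; field_simp; ring
  have ha : (1:ℝ) - t ≠ 0 := by rw [h1t]; positivity
  have hΔ : (1 - t)*1 - (-t)*1 ≠ 0 := by
    have : (1 - t)*1 - (-t)*1 = 1 := by ring
    rw [this]; exact one_ne_zero
  have horth : (1 - t)*1*(P:ℝ) + (-t)*1*(σZ:ℝ) = 0 := by
    rw [ht]; field_simp; ring
  -- the linear images of (X, Z)
  have hpair := map_pair_lin hX hZ hXZ hP.ne' hσZ.ne' hlX hlZ
    (a := 1 - t) (b := -t) (c := 1) (d := 1) ha hΔ horth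
  set vV : ℝ≥0 := ((1 - t)^2*(P:ℝ) + (-t)^2*(σZ:ℝ)).toNNReal with hvV
  set vXZ : ℝ≥0 := ((1:ℝ)^2*(P:ℝ) + (1:ℝ)^2*(σZ:ℝ)).toNNReal with hvXZ
  have hvVpos : (0:ℝ) < (1 - t)^2*(P:ℝ) + (-t)^2*(σZ:ℝ) := by
    have h2 : 0 < (1-t)^2*(P:ℝ) := by positivity
    nlinarith [mul_nonneg (sq_nonneg (-t)) hZpos.le]
  have hvVne : vV ≠ 0 := by
    rw [hvV]; simp only [ne_eq, Real.toNNReal_eq_zero, not_le]; exact hvVpos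
  have hvXZne : vXZ ≠ 0 := by
    rw [hvXZ]; simp only [ne_eq, Real.toNNReal_eq_zero, not_le]; nlinarith
  have hVmeas : Measurable (fun ω => (1 - t)*X ω + (-t)*Z ω) :=
    (hX.const_mul _).add (hZ.const_mul _)
  have hXZmeas' : Measurable (fun ω => 1*X ω + 1*Z ω) :=
    (hX.const_mul _).add (hZ.const_mul _)
  have hTm : Measurable (fun ω => ((1 - t)*X ω + (-t)*Z ω, 1*X ω + 1*Z ω)) :=
    hVmeas.prodMk hXZmeas'
  have hlV : Measure.map (fun ω => (1 - t)*X ω + (-t)*Z ω) volume = gaussianReal 0 vV :=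
    map_fst_lin hX hZ hXZ hP.ne' hσZ.ne' hlX hlZ (c := 1) (d := 1) ha hΔ horth
  have hlXZ' : Measure.map (fun ω => 1*X ω + 1*Z ω) volume = gaussianReal 0 vXZ := by
    have hcomp : (fun ω => 1*X ω + 1*Z ω)
        = Prod.snd ∘ (fun ω => ((1 - t)*X ω + (-t)*Z ω, 1*X ω + 1*Z ω)) := rfl
    rw [hcomp, ← Measure.map_map measurable_snd hTm, hpair, Measure.map_snd_prod,
      measure_univ, one_smul]
  -- independence of V' and X+Z
  have hIndV : IndepFun (fun ω => (1 - t)*X ω + (-t)*Z ω) (fun ω => 1*X ω + 1*Z ω) := by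
    rw [indepFun_iff_map_prod_eq_prod_map_map hVmeas.aemeasurable hXZmeas'.aemeasurable,
      hpair, hlV, hlXZ']
  -- independence with S
  have hVXZ_S : IndepFun (fun ω => ((1 - t)*X ω + (-t)*Z ω, 1*X ω + 1*Z ω)) S :=
    hXZS.comp (((measurable_fst.const_mul _).add (measurable_snd.const_mul _)).prodMk
      ((measurable_fst.const_mul (1:ℝ)).add (measurable_snd.const_mul 1))) measurable_id
  have hXZ_S : IndepFun (fun ω => 1*X ω + 1*Z ω) S :=
    hXZS.comp ((measurable_fst.const_mul (1:ℝ)).add (measurable_snd.const_mul 1)) measurable_id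
  have hbig : IndepFun (fun ω => (1 - t)*X ω + (-t)*Z ω)
      (fun ω => ((1*X ω + 1*Z ω : ℝ), S ω)) :=
    indepFun_pair_right hVmeas hXZmeas' hS hIndV hVXZ_S hXZ_S
  -- convert to the required form
  have e1 : (fun ω => (X ω + t * S ω) - t * (X ω + Z ω + S ω))
      = (fun ω => (1 - t)*X ω + (-t)*Z ω) := by
    funext ω; ring
  have e2 : (fun ω => ((X ω + Z ω : ℝ), S ω)) = (fun ω => ((1*X ω + 1*Z ω : ℝ), S ω)) := by
    funext ω; norm_num
  have hindep : IndepFun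
      (fun ω => (X ω + t * S ω) - t * (X ω + Z ω + S ω))
      (fun ω => ((X ω + Z ω : ℝ), S ω)) := by
    rw [e1, e2]; exact hbig
  refine ⟨hindep, ?_⟩
  -- laws needed for the entropy computation
  have hXS : IndepFun X S := hXZS.comp measurable_fst measurable_id
  have hXZsum_S : IndepFun (fun ω => X ω + Z ω) S := by
    have e3 : (fun ω => X ω + Z ω) = (fun ω => 1*X ω + 1*Z ω) := by funext ω; ring
    rw [e3]; exact hXZ_S
  have hlXZsum : Measure.map (fun ω => X ω + Z ω) volume = gaussianReal 0 vXZ := by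
    have e3 : (fun ω => X ω + Z ω) = (fun ω => 1*X ω + 1*Z ω) := by funext ω; ring
    rw [e3]; exact hlXZ'
  set vY : ℝ≥0 := ((vXZ:ℝ) + (σS:ℝ)).toNNReal with hvY
  have hlY : Measure.map (fun ω => X ω + Z ω + S ω) volume = gaussianReal 0 vY :=
    map_add_gaussian ((hX.add hZ)) hS hXZsum_S hvXZne hσS.ne' hlXZsum hlS
  have hvYne : vY ≠ 0 := by
    rw [hvY]; simp only [ne_eq, Real.toNNReal_eq_zero, not_le]
    have : (0:ℝ) < vXZ := by exact_mod_cast pos_iff_ne_zero.mpr hvXZne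
    linarith
  -- independence of V' and Y
  have hIndVY : IndepFun (fun ω => (1 - t)*X ω + (-t)*Z ω) (fun ω => X ω + Z ω + S ω) := by
    have h := hindep.comp measurable_id (measurable_fst.add measurable_snd)
    rw [e1] at h
    exact h
  -- entropy of the pair (U, Y)
  have hUY : dEnt (volume : Measure (ℝ × ℝ))
      (fun ω => ((1 - t)*X ω + (-t)*Z ω + t * (X ω + Z ω + S ω), X ω + Z ω + S ω))
      = Hent vV + Hent vY :=
    dEnt_pair_shear hVmeas (hX.add hZ |>.add hS) hIndVY hvVne hvYne hlV hlY t
  have hUS : dEnt (volume : Measure (ℝ × ℝ)) (fun ω => (X ω + t * S ω, S ω))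
      = Hent P + Hent σS :=
    dEnt_pair_shear hX hS hXS hP.ne' hσS.ne' hlX hlS t
  have hY : dEnt (volume : Measure ℝ) (fun ω => X ω + Z ω + S ω) = Hent vY :=
    dEnt_gaussian hvYne hlY
  have hSent : dEnt (volume : Measure ℝ) S = Hent σS := dEnt_gaussian hσS.ne' hlS
  -- final arithmetic
  have epair : (fun ω => ((X ω + t * S ω : ℝ), (X ω + Z ω + S ω : ℝ)))
      = (fun ω => ((1 - t)*X ω + (-t)*Z ω + t * (X ω + Z ω + S ω), X ω + Z ω + S ω)) := by
    funext ω
    rw [Prod.mk.injEq]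
    exact ⟨by ring, rfl⟩
  have hfin : Hent P - Hent vV = 1/2 * Real.logb 2 (1 + (P:ℝ)/(σZ:ℝ)) := by
    have hvVval : (vV:ℝ) = (P:ℝ)*(σZ:ℝ)/((P:ℝ)+(σZ:ℝ)) := by
      rw [hvV, Real.coe_toNNReal _ hvVpos.le, ht]
      field_simp
      ring
    rw [Hent, Hent]
    have harg : 2*Real.pi*(P:ℝ) / (2*Real.pi*(vV:ℝ)) = 1 + (P:ℝ)/(σZ:ℝ) := by
      rw [hvVval]
      have hpi := Real.pi_pos
      field_simp
      ring
    have hvVposc : (0:ℝ) < (vV:ℝ) := by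
      rw [hvVval]; positivity
    rw [show Real.logb 2 (2*Real.pi*(P:ℝ))/2 + 1/(2*Real.log 2)
        - (Real.logb 2 (2*Real.pi*(vV:ℝ))/2 + 1/(2*Real.log 2))
        = (Real.logb 2 (2*Real.pi*(P:ℝ)) - Real.logb 2 (2*Real.pi*(vV:ℝ)))/2 by ring,
      ← Real.logb_div (by positivity) (by positivity), harg]
    ring
  simp only [dMI]
  rw [epair, hUY, hUS, hY, hSent]
  linear_combination hfin
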